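/- Define w(x,y) on ℝ × (0,∞) by w(x,y) = 0 for x < -√y, w(x,y) = (x + √y)/(2√y) for |x| ≤ √y, and w(x,y) = 1 for x > √y. Then for any κ ∈ (0, 1/4) and ε > 0, ∫_{|x|<ε} ∫₀^1 y^{1-2κ} |∇w(x,y)|² dy dx < ∞. -/

import Mathlib

open MeasureTheory Set
open scoped ENNReal

/-- The piecewise function of Example `exampledisc`: `w(x,y) = 0` for `x < -√y`,
`(x+√y)/(2√y)` for `|x| ≤ √y`, and `1` for `x > √y`. -/
noncomputable def wEx (p : ℝ × ℝ) : ℝ :=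
  if p.1 < -Real.sqrt p.2 then 0
  else if Real.sqrt p.2 < p.1 then 1
  else (p.1 + Real.sqrt p.2) / (2 * Real.sqrt p.2)

lemma opNorm_le_eval (L : ℝ × ℝ →L[ℝ] ℝ) : ‖L‖ ≤ ‖L (1,0)‖ + ‖L (0,1)‖ := by
  refine L.opNorm_le_bound (by positivity) fun v => ?_
  have hv : L v = v.1 • L (1,0) + v.2 • L (0,1) := by
    have h : ((v.1, v.2) : ℝ × ℝ) = v.1 • ((1:ℝ),(0:ℝ)) + v.2 • ((0:ℝ),(1:ℝ)) := by
      ext <;> simp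
    calc L v = L (v.1 • ((1:ℝ),(0:ℝ)) + v.2 • ((0:ℝ),(1:ℝ))) := by rw [← h]
      _ = v.1 • L (1,0) + v.2 • L (0,1) := by rw [map_add, L.map_smul, L.map_smul]
  rw [hv]
  calc ‖v.1 • L (1,0) + v.2 • L (0,1)‖ ≤ ‖v.1 • L (1,0)‖ + ‖v.2 • L (0,1)‖ := norm_add_le _ _
    _ = ‖v.1‖ * ‖L (1,0)‖ + ‖v.2‖ * ‖L (0,1)‖ := by rw [norm_smul, norm_smul]
    _ ≤ ‖v‖ * ‖L (1,0)‖ + ‖v‖ * ‖L (0,1)‖ := by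
        gcongr
        · exact norm_fst_le v
        · exact norm_snd_le v
    _ = (‖L (1,0)‖ + ‖L (0,1)‖) * ‖v‖ := by ring

lemma wEx_fderiv_sq_le {p : ℝ × ℝ} (hy : 0 < p.2) (hx : p.1^2 < p.2) :
    ‖fderiv ℝ wEx p‖^2 ≤ 1/(2*p.2) + 1/(8*p.2^2) := by
  have hs : 0 < Real.sqrt p.2 := Real.sqrt_pos.mpr hy
  have hs2 : Real.sqrt p.2 ^ 2 = p.2 := Real.sq_sqrt hy.le
  -- build the derivative
  have hsq : HasFDerivAt (fun q : ℝ × ℝ => Real.sqrt q.2)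
      ((1/(2*Real.sqrt p.2)) • ContinuousLinearMap.snd ℝ ℝ ℝ) p :=
    (Real.hasDerivAt_sqrt hy.ne').comp_hasFDerivAt p hasFDerivAt_snd
  have h2s : (2 * Real.sqrt p.2) ≠ 0 := by positivity
  have hinv := (hasDerivAt_inv h2s).comp_hasFDerivAt p (hsq.const_mul (2:ℝ))
  have hmul := (hasFDerivAt_fst (𝕜 := ℝ) (p := p)).mul hinv
  have hf := hmul.add_const (1/2 : ℝ)
  -- wEx agrees with this function near p
  have hU : IsOpen {q : ℝ × ℝ | 0 < q.2 ∧ q.1^2 < q.2} :=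
    (isOpen_lt continuous_const continuous_snd).inter
      (isOpen_lt ((continuous_pow 2).comp continuous_fst) continuous_snd)
  have heq : wEx =ᶠ[nhds p] (fun q : ℝ × ℝ => q.1 * (2 * Real.sqrt q.2)⁻¹ + 1/2) := by
    filter_upwards [hU.mem_nhds ⟨hy, hx⟩] with q hq
    obtain ⟨hq2, hq1⟩ := hq
    have hsq' : 0 < Real.sqrt q.2 := Real.sqrt_pos.mpr hq2
    have habs : |q.1| < Real.sqrt q.2 := by
      have h := Real.sqrt_lt_sqrt (sq_nonneg q.1) hq1
      rwa [Real.sqrt_sq_eq_abs] at h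
    have h1 : ¬ q.1 < -Real.sqrt q.2 := by
      have := neg_lt_of_abs_lt habs
      linarith
    have h2 : ¬ Real.sqrt q.2 < q.1 := by
      have := lt_of_abs_lt habs
      linarith
    simp only [wEx, if_neg h1, if_neg h2]
    field_simp
  have hW := hf.congr_of_eventuallyEq heq
  have hfd := hW.fderiv
  have e1 : ‖(fderiv ℝ wEx p) (1,0)‖ = 1/(2*Real.sqrt p.2) := by
    rw [hfd]
    simp
  have e2 : ‖(fderiv ℝ wEx p) (0,1)‖ ≤ 1/(4*p.2) := by
    rw [hfd]
    simp only [ContinuousLinearMap.add_apply, ContinuousLinearMap.smul_apply,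
      ContinuousLinearMap.neg_apply, ContinuousLinearMap.coe_fst',
      ContinuousLinearMap.coe_snd', Function.comp]
    show ‖p.1 • -((2 * Real.sqrt p.2) ^ 2)⁻¹ • (2:ℝ) • (1 / (2 * Real.sqrt p.2)) • (1:ℝ)
        + (2 * Real.sqrt p.2)⁻¹ • (0:ℝ)‖ ≤ 1 / (4 * p.2)
    have hX : p.1 • -((2 * Real.sqrt p.2) ^ 2)⁻¹ • (2:ℝ) • (1 / (2 * Real.sqrt p.2)) • (1:ℝ)
        + (2 * Real.sqrt p.2)⁻¹ • (0:ℝ) = -(p.1/(4*p.2*Real.sqrt p.2)) := by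
      simp only [smul_eq_mul, mul_one, mul_zero, add_zero]
      rw [mul_pow, Real.sq_sqrt hy.le]
      field_simp
      ring
    refine le_trans (le_of_eq (congrArg Norm.norm hX)) ?_
    rw [norm_neg, Real.norm_eq_abs, abs_div,
      abs_of_pos (show (0:ℝ) < 4*p.2*Real.sqrt p.2 by positivity),
      div_le_div_iff₀ (by positivity) (by positivity)]
    have habs : |p.1| ≤ Real.sqrt p.2 := by
      rw [← Real.sqrt_sq_eq_abs]; exact Real.sqrt_le_sqrt hx.le
    nlinarith [mul_le_mul_of_nonneg_right habs (show (0:ℝ) ≤ 4*p.2 by positivity)]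
  have hD := opNorm_le_eval (fderiv ℝ wEx p)
  rw [e1] at hD
  have hD2 : ‖fderiv ℝ wEx p‖ ≤ 1/(2*Real.sqrt p.2) + 1/(4*p.2) := by linarith
  have h1 : ‖fderiv ℝ wEx p‖^2 ≤ (1/(2*Real.sqrt p.2) + 1/(4*p.2))^2 :=
    pow_le_pow_left₀ (norm_nonneg _) hD2 2
  have h2 : (1/(2*Real.sqrt p.2) + 1/(4*p.2))^2 ≤ 2*(1/(2*Real.sqrt p.2))^2 + 2*(1/(4*p.2))^2 := by
    nlinarith [sq_nonneg (1/(2*Real.sqrt p.2) - 1/(4*p.2))]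
  have hA : (1/(2*Real.sqrt p.2))^2 = 1/(4*p.2) := by
    rw [div_pow, one_pow, mul_pow, Real.sq_sqrt hy.le]
    norm_num
  have h3 : 2*(1/(2*Real.sqrt p.2))^2 + 2*(1/(4*p.2))^2 = 1/(2*p.2) + 1/(8*p.2^2) := by
    rw [hA]
    field_simp
    ring
  linarith

lemma wEx_fderiv_zero {p : ℝ × ℝ} (hy : 0 < p.2) (hx : p.2 < p.1^2) :
    fderiv ℝ wEx p = 0 := by
  have habs : Real.sqrt p.2 < |p.1| := by
    have h := Real.sqrt_lt_sqrt hy.le hx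
    rwa [Real.sqrt_sq_eq_abs] at h
  have hs : 0 < Real.sqrt p.2 := Real.sqrt_pos.mpr hy
  rcases le_or_gt 0 p.1 with h0 | h0
  · -- right region, wEx = 1
    have hV : IsOpen {q : ℝ × ℝ | Real.sqrt q.2 < q.1} :=
      isOpen_lt (Real.continuous_sqrt.comp continuous_snd) continuous_fst
    have hmem : p ∈ {q : ℝ × ℝ | Real.sqrt q.2 < q.1} := by
      have h1 : |p.1| = p.1 := abs_of_nonneg h0
      show Real.sqrt p.2 < p.1
      rw [← h1]; exact habs
    have heq : wEx =ᶠ[nhds p] (fun _ => (1:ℝ)) := by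
      filter_upwards [hV.mem_nhds hmem] with q hq
      have h1 : ¬ q.1 < -Real.sqrt q.2 := by
        have h2 := Real.sqrt_nonneg q.2
        have h3 : Real.sqrt q.2 < q.1 := hq
        push_neg
        linarith
      simp only [wEx, if_neg h1, if_pos hq]
    rw [heq.fderiv_eq]
    exact fderiv_const_apply 1
  · -- left region, wEx = 0
    have hV : IsOpen {q : ℝ × ℝ | q.1 < -Real.sqrt q.2} :=
      isOpen_lt continuous_fst (Real.continuous_sqrt.comp continuous_snd).neg
    have hmem : p ∈ {q : ℝ × ℝ | q.1 < -Real.sqrt q.2} := by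
      have : |p.1| = -p.1 := abs_of_neg h0
      simp only [mem_setOf_eq]
      linarith [habs.trans_eq this]
    have heq : wEx =ᶠ[nhds p] (fun _ => (0:ℝ)) := by
      filter_upwards [hV.mem_nhds hmem] with q hq
      simp only [wEx, if_pos hq]
    rw [heq.fderiv_eq]
    exact fderiv_const_apply 0

/-- for any `κ ∈ (0, 1/4)` and `ε > 0`, the weighted Dirichlet energy
`∫_{|x|<ε} ∫₀^1 y^(1-2κ) |∇w(x,y)|² dy dx` of the piecewise function `wEx` is finite. -/
theorem example_energy_finite (κ : ℝ) (hκ0 : 0 < κ) (hκ : κ < 1/4) (ε : ℝ) (hε : 0 < ε) :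
    (∫⁻ p in (Ioo (-ε) ε) ×ˢ (Ioo (0:ℝ) 1),
        ENNReal.ofReal (p.2 ^ (1 - 2 * κ) * ‖fderiv ℝ wEx p‖ ^ 2) ∂volume) < ⊤ := by
  set c : ℝ → ℝ := fun y => y ^ (1 - 2*κ) * (1/(2*y) + 1/(8*y^2)) with hc
  set H : ℝ × ℝ → ℝ≥0∞ :=
    fun p => if p.1^2 ≤ p.2 ∧ p.2 < 1 then ENNReal.ofReal (c p.2) else 0 with hH
  have hSmeas : MeasurableSet ((Ioo (-ε) ε) ×ˢ (Ioo (0:ℝ) 1)) :=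
    measurableSet_Ioo.prod measurableSet_Ioo
  -- a.e. bound
  have hNnull : volume {p : ℝ × ℝ | p.2 = p.1^2} = 0 := by
    have hmeas : MeasurableSet {p : ℝ × ℝ | p.2 = p.1^2} :=
      (isClosed_eq continuous_snd ((continuous_pow 2).comp continuous_fst)).measurableSet
    rw [MeasureTheory.Measure.volume_eq_prod, MeasureTheory.Measure.prod_apply hmeas]
    have : ∀ x : ℝ, (Prod.mk x ⁻¹' {p : ℝ × ℝ | p.2 = p.1^2}) = {x^2} := by
      intro x; ext y; simp [Set.mem_setOf_eq]
    simp [this]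
  have step1 : (∫⁻ p in (Ioo (-ε) ε) ×ˢ (Ioo (0:ℝ) 1),
      ENNReal.ofReal (p.2 ^ (1 - 2 * κ) * ‖fderiv ℝ wEx p‖ ^ 2) ∂volume)
      ≤ ∫⁻ p in (Ioo (-ε) ε) ×ˢ (Ioo (0:ℝ) 1), H p ∂volume := by
    refine lintegral_mono_ae ?_
    have h1 : ∀ᵐ p : ℝ × ℝ ∂volume, p.2 ≠ p.1^2 := by
      rw [ae_iff]
      simpa using hNnull
    refine (ae_restrict_iff' hSmeas).mpr (h1.mono fun p hp hpS => ?_)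
    obtain ⟨hpx, hpy⟩ := hpS
    rcases lt_or_gt_of_ne (fun h => hp h.symm : p.1^2 ≠ p.2) with hlt | hgt
    · have hb := wEx_fderiv_sq_le hpy.1 hlt
      have hcond : p.1^2 ≤ p.2 ∧ p.2 < 1 := ⟨hlt.le, hpy.2⟩
      rw [hH]
      simp only [if_pos hcond]
      refine ENNReal.ofReal_le_ofReal ?_
      exact mul_le_mul_of_nonneg_left hb (Real.rpow_nonneg hpy.1.le _)
    · have hb := wEx_fderiv_zero hpy.1 hgt
      rw [hb]
      simp
  have step2 : (∫⁻ p in (Ioo (-ε) ε) ×ˢ (Ioo (0:ℝ) 1), H p ∂volume)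
      ≤ ∫⁻ p, H p ∂volume := setLIntegral_le_lintegral _ _
  -- measurability of H
  have hcmeas : Measurable c := by
    have h1 : Measurable fun y : ℝ => y ^ (1 - 2*κ) :=
      (Real.continuous_rpow_const (by linarith)).measurable
    exact h1.mul ((measurable_const.div (measurable_const.mul measurable_id)).add
        (measurable_const.div (measurable_const.mul (measurable_id.pow_const 2))))
  have hHmeas : Measurable H := by
    refine Measurable.ite ?_ (ENNReal.measurable_ofReal.comp (hcmeas.comp measurable_snd))
      measurable_const
    exact ((isClosed_le ((continuous_pow 2).comp continuous_fst) continuous_snd).measurableSet).inter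
      (measurable_snd measurableSet_Iio)
  have step3 : (∫⁻ p, H p ∂volume) = ∫⁻ y, ∫⁻ x, H (x, y) ∂volume ∂volume := by
    rw [MeasureTheory.Measure.volume_eq_prod]
    exact MeasureTheory.lintegral_prod_symm _ hHmeas.aemeasurable
  -- pointwise bound on the inner integral
  set ψ : ℝ → ℝ≥0∞ := fun y =>
    if 0 < y ∧ y < 1 then ENNReal.ofReal (2 * Real.sqrt y * c y) else 0 with hψ
  have step4 : ∀ y : ℝ, (∫⁻ x, H (x, y) ∂volume) ≤ ψ y := by
    intro y
    rcases lt_or_ge y 1 with hy1 | hy1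
    · have hHx : ∀ x : ℝ, H (x, y) = Set.indicator {x : ℝ | x^2 ≤ y}
          (fun _ => ENNReal.ofReal (c y)) x := by
        intro x
        rw [hH]
        by_cases h : x^2 ≤ y
        · simp [Set.indicator_of_mem, h, hy1]
        · simp [Set.indicator_of_notMem, h]
      have hmx : MeasurableSet {x : ℝ | x^2 ≤ y} :=
        (isClosed_le (continuous_pow 2) continuous_const).measurableSet
      have hvol : volume {x : ℝ | x^2 ≤ y} ≤ ENNReal.ofReal (2 * Real.sqrt y) := by
        have hsub : {x : ℝ | x^2 ≤ y} ⊆ Icc (-Real.sqrt y) (Real.sqrt y) := by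
          intro x hx
          have h := Real.sqrt_le_sqrt hx
          rw [Real.sqrt_sq_eq_abs] at h
          exact abs_le.mp h
        calc volume {x : ℝ | x^2 ≤ y} ≤ volume (Icc (-Real.sqrt y) (Real.sqrt y)) :=
              measure_mono hsub
          _ = ENNReal.ofReal (Real.sqrt y - -Real.sqrt y) := Real.volume_Icc
          _ = ENNReal.ofReal (2 * Real.sqrt y) := by ring_nf
      calc (∫⁻ x, H (x, y) ∂volume)
          = ∫⁻ x, Set.indicator {x : ℝ | x^2 ≤ y} (fun _ => ENNReal.ofReal (c y)) x ∂volume := by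
            simp_rw [hHx]
        _ = ENNReal.ofReal (c y) * volume {x : ℝ | x^2 ≤ y} := by
            rw [lintegral_indicator hmx, setLIntegral_const]
        _ ≤ ENNReal.ofReal (c y) * ENNReal.ofReal (2 * Real.sqrt y) := by
            exact mul_le_mul_right hvol _
        _ ≤ ψ y := by
            rcases le_or_gt y 0 with hy0 | hy0
            · have hz : Real.sqrt y = 0 := Real.sqrt_eq_zero'.mpr hy0
              rw [hz]
              norm_num
            · rw [hψ]
              simp only [if_pos (⟨hy0, hy1⟩ : 0 < y ∧ y < 1)]
              rw [← ENNReal.ofReal_mul (by positivity)]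
              exact ENNReal.ofReal_le_ofReal (le_of_eq (by ring))
    · have : ∀ x : ℝ, H (x, y) = 0 := by
        intro x
        rw [hH]
        simp [not_lt.mpr hy1]
      simp [this]
  -- the outer integral
  set φ : ℝ → ℝ := fun y => y ^ ((1:ℝ)/2 - 2*κ) + (1/4) * y ^ (-(1:ℝ)/2 - 2*κ) with hφ
  have hφint : IntegrableOn φ (Ioo (0:ℝ) 1) := by
    have i1 : IntervalIntegrable (fun x : ℝ => x ^ ((1:ℝ)/2 - 2*κ)) volume 0 1 :=
      intervalIntegral.intervalIntegrable_rpow' (by norm_num; linarith)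
    have i2 : IntervalIntegrable (fun x : ℝ => x ^ (-(1:ℝ)/2 - 2*κ)) volume 0 1 :=
      intervalIntegral.intervalIntegrable_rpow' (by norm_num; linarith)
    rw [intervalIntegrable_iff_integrableOn_Ioc_of_le (by norm_num)] at i1 i2
    exact IntegrableOn.mono_set (i1.add (i2.const_mul (1/4))) Ioo_subset_Ioc_self
  have hψeq : ∀ y ∈ Ioo (0:ℝ) 1, 2 * Real.sqrt y * c y = φ y := by
    intro y hy
    have hy0 : 0 < y := hy.1
    have hm1 : y ^ (-1:ℝ) = y⁻¹ := by rw [Real.rpow_neg hy0.le, Real.rpow_one]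
    have hm2 : y ^ (-2:ℝ) = (y^2)⁻¹ := by
      rw [Real.rpow_neg hy0.le, show (2:ℝ) = ((2:ℕ):ℝ) by norm_num, Real.rpow_natCast]
    have A : y ^ ((1:ℝ)/2 - 2*κ) = 2 * Real.sqrt y * (y ^ (1-2*κ) * (1/(2*y))) := by
      rw [Real.sqrt_eq_rpow, show ((1:ℝ)/2 - 2*κ : ℝ) = 1/2 + ((1-2*κ) + (-1)) by ring,
        Real.rpow_add hy0, Real.rpow_add hy0, hm1]
      field_simp
    have B : (1/4) * y ^ (-(1:ℝ)/2 - 2*κ) = 2 * Real.sqrt y * (y ^ (1-2*κ) * (1/(8*y^2))) := by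
      rw [Real.sqrt_eq_rpow, show (-(1:ℝ)/2 - 2*κ : ℝ) = 1/2 + ((1-2*κ) + (-2)) by ring,
        Real.rpow_add hy0, Real.rpow_add hy0, hm2]
      field_simp
      ring
    rw [hφ]
    simp only
    rw [A, B, hc]
    simp only
    ring
  have step5 : (∫⁻ y, ψ y ∂volume) < ⊤ := by
    have hind : ψ = Set.indicator (Ioo (0:ℝ) 1)
        (fun y => ENNReal.ofReal (2 * Real.sqrt y * c y)) := by
      funext y
      rw [hψ]
      by_cases h : y ∈ Ioo (0:ℝ) 1
      · simp only [hψ, Set.indicator_of_mem h, if_pos (⟨h.1, h.2⟩ : 0 < y ∧ y < 1)]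
      · have h' : ¬(0 < y ∧ y < 1) := by simpa [mem_Ioo] using h
        simp only [hψ, Set.indicator_of_notMem h, if_neg h']
    rw [hind, lintegral_indicator measurableSet_Ioo]
    calc (∫⁻ y in Ioo (0:ℝ) 1, ENNReal.ofReal (2 * Real.sqrt y * c y) ∂volume)
        = ∫⁻ y in Ioo (0:ℝ) 1, ENNReal.ofReal (φ y) ∂volume :=
          setLIntegral_congr_fun measurableSet_Ioo
            (fun y hy => by rw [hψeq y hy])
      _ < ⊤ := hφint.lintegral_lt_top
  calc (∫⁻ p in (Ioo (-ε) ε) ×ˢ (Ioo (0:ℝ) 1),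
      ENNReal.ofReal (p.2 ^ (1 - 2 * κ) * ‖fderiv ℝ wEx p‖ ^ 2) ∂volume)
      ≤ ∫⁻ p in (Ioo (-ε) ε) ×ˢ (Ioo (0:ℝ) 1), H p ∂volume := step1
    _ ≤ ∫⁻ p, H p ∂volume := step2
    _ = ∫⁻ y, ∫⁻ x, H (x, y) ∂volume ∂volume := step3
    _ ≤ ∫⁻ y, ψ y ∂volume := lintegral_mono step4
    _ < ⊤ := step5
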